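/- arXiv:1502.05558 — 3 statements merged into one kernel-verified Lean document; each statement's English description precedes it below -/
import Mathlib

section
/- Bisimilarity Lemma: Let 𝒯=(T,σ,τ) be a tile assembly system on a space graph G=(V,E). There exists a map f from sets of glue movies to sets of restricted assembly sequences such that for every cut-set X ⊆ E separating G into two connected components Y and Z with dom σ ⊆ Y, the policy set 𝒫(𝒯,Z) equals f(𝒟(𝒯,X)). In other words, the policy set of a tile assembly system in a zone Z containing no tile of the seed depends only on the diplomatic set on the border of Z. -/
namespace ATAM

/-- The four planar directions (north, east, south, west). -/
inductive Dir : Type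
  | N | E | S | W
  deriving DecidableEq, Repr

instance : Fintype Dir :=
  ⟨⟨{Dir.N, Dir.E, Dir.S, Dir.W}, by decide⟩, by intro x; cases x <;> decide⟩

/-- A space graph: a regular graph in which every vertex has exactly one
incident edge in each direction, together with a coherent notion of
opposite directions. -/
structure SpaceGraph (D V : Type) where
  opp : D → D
  nbr : D → V → V
  opp_opp : ∀ d, opp (opp d) = d
  nbr_opp : ∀ d v, nbr (opp d) (nbr d v) = v

/-- A glue: a label together with a nonnegative integer strength.
A glue of strength `0` plays the role of the null glue. -/
abbrev Glue := ℕ × ℕ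

/-- The null glue. -/
def nullGlue : Glue := (0, 0)

/-- A tile type assigns a glue to each of its sides; tile types can be
neither rotated nor flipped. -/
abbrev Tile (D : Type) := D → Glue

/-- An assembly: a partial placement of tile types on the vertices. -/
abbrev Assembly (D V : Type) := V → Option (Tile D)

/-- The domain of an assembly. -/
def Assembly.dom {D V : Type} (α : Assembly D V) : Set V := {v | α v ≠ none}

section Core

variable {D V : Type} [Fintype D] [DecidableEq D] [DecidableEq V]

/-- Strength of the bond between the tile at `v` and the tile at its
`d`-neighbour: the two tiles interact iff the glues on their abutting
sides are equal and of positive strength. -/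
def bondStrength (G : SpaceGraph D V) (α : Assembly D V) (v : V) (d : D) : ℕ :=
  match α v, α (G.nbr d v) with
  | some t, some t' => if t d = t' (G.opp d) ∧ 0 < (t d).2 then (t d).2 else 0
  | _, _ => 0

/-- Strength with which tile `t`, placed at `z`, would bind along side `d`. -/
def sideStrength (G : SpaceGraph D V) (α : Assembly D V) (t : Tile D) (z : V) (d : D) : ℕ :=
  match α (G.nbr d z) with
  | some t' => if t d = t' (G.opp d) ∧ 0 < (t d).2 then (t d).2 else 0
  | none => 0

/-- Total binding strength of tile `t` at position `z`. -/
def attachStrength (G : SpaceGraph D V) (α : Assembly D V) (t : Tile D) (z : V) : ℕ :=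
  ∑ d : D, sideStrength G α t z d

/-- τ-stability: every cut of the binding graph has weight at least τ. -/
def StableAt (G : SpaceGraph D V) (τ : ℕ) (α : Assembly D V) : Prop :=
  ∀ A : Set V, (A ∩ α.dom).Nonempty → (α.dom \ A).Nonempty →
    ∃ B : Finset (V × D),
      (∀ p ∈ B, p.1 ∈ A ∩ α.dom ∧ G.nbr p.2 p.1 ∈ α.dom \ A) ∧
      τ ≤ ∑ p ∈ B, bondStrength G α p.1 p.2

end Core

/-- A tile assembly system: a finite tileset, a seed assembly and a temperature. -/
structure TAS (D V : Type) [Fintype D] [DecidableEq D] where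
  tiles : Finset (Tile D)
  seed : Assembly D V
  temp : ℕ

section Dynamics

variable {D V : Type} [Fintype D] [DecidableEq D] [DecidableEq V]

/-- The tile `t` (from the tileset) can attach to `α` at the empty position `z`
with total matching glue strength at least the temperature. -/
def CanAttach (G : SpaceGraph D V) (𝒯 : TAS D V) (α : Assembly D V) (t : Tile D) (z : V) : Prop :=
  t ∈ 𝒯.tiles ∧ α z = none ∧ 𝒯.temp ≤ attachStrength G α t z

/-- The assembly obtained by placing tile `t` at position `z`. -/
def attach (α : Assembly D V) (t : Tile D) (z : V) : Assembly D V :=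
  Function.update α z (some t)

/-- `IsSeqFrom G 𝒯 α l`: `l` is a valid sequence of single-tile attachments
starting from the assembly `α` in the system `𝒯`. -/
def IsSeqFrom (G : SpaceGraph D V) (𝒯 : TAS D V) : Assembly D V → List (Tile D × V) → Prop
  | _, [] => True
  | α, a :: l => CanAttach G 𝒯 α a.1 a.2 ∧ IsSeqFrom G 𝒯 (attach α a.1 a.2) l

/-- Result of performing a sequence of attachments. -/
def resultOf : Assembly D V → List (Tile D × V) → Assembly D V
  | α, [] => α
  | α, a :: l => resultOf (attach α a.1 a.2) l

/-- One (possibly stuttering) step of assembly. -/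
def Extends1 (G : SpaceGraph D V) (𝒯 : TAS D V) (α β : Assembly D V) : Prop :=
  β = α ∨ ∃ t z, CanAttach G 𝒯 α t z ∧ β = attach α t z

/-- `β` is producible from `α` in `𝒯`: it is the (possibly infinite) limit of a
chain of single-tile attachments starting from `α`. -/
def ProducibleFrom (G : SpaceGraph D V) (𝒯 : TAS D V) (α β : Assembly D V) : Prop :=
  ∃ f : ℕ → Assembly D V, f 0 = α ∧ (∀ n, Extends1 G 𝒯 (f n) (f (n + 1))) ∧
    ∀ v t, β v = some t ↔ ∃ n, f n v = some t

/-- The set of productions of `𝒯`. -/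
def Producible (G : SpaceGraph D V) (𝒯 : TAS D V) (β : Assembly D V) : Prop :=
  ProducibleFrom G 𝒯 𝒯.seed β

/-- Terminal productions. -/
def Terminal (G : SpaceGraph D V) (𝒯 : TAS D V) (β : Assembly D V) : Prop :=
  Producible G 𝒯 β ∧ ∀ t z, ¬ CanAttach G 𝒯 β t z

/-- Well-formedness of a TAS: positive temperature, finite seed whose tiles
come from the tileset, and τ-stable seed. -/
def WellFormed (G : SpaceGraph D V) (𝒯 : TAS D V) : Prop :=
  1 ≤ 𝒯.temp ∧ 𝒯.seed.dom.Finite ∧ (∀ v t, 𝒯.seed v = some t → t ∈ 𝒯.tiles) ∧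
    StableAt G 𝒯.temp 𝒯.seed

/-- Two adjacent tiles of `α` do not match: at least one of them has a glue of
strictly positive strength on their common side, and the glues there differ. -/
def HasMismatch (G : SpaceGraph D V) (α : Assembly D V) : Prop :=
  ∃ v d t t', α v = some t ∧ α (G.nbr d v) = some t' ∧
    t d ≠ t' (G.opp d) ∧ (0 < (t d).2 ∨ 0 < (t' (G.opp d)).2)

/-- A mismatch-free system: no producible assembly contains a mismatch. -/
def MismatchFree (G : SpaceGraph D V) (𝒯 : TAS D V) : Prop :=
  ∀ α, Producible G 𝒯 α → ¬ HasMismatch G α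

/-- A locally consistent system: mismatch-free, and every tile always attaches
with the sum of matching glue strengths exactly equal to the temperature. -/
def LocallyConsistent (G : SpaceGraph D V) (𝒯 : TAS D V) : Prop :=
  MismatchFree G 𝒯 ∧
    ∀ α t z, Producible G 𝒯 α → CanAttach G 𝒯 α t z →
      attachStrength G α t z = 𝒯.temp

end Dynamics

end ATAM

namespace ATAM

/-- Classical `decide`. -/
noncomputable def cdecide (P : Prop) : Bool := @decide P (Classical.propDecidable P)

/-- A glue addition: an (undirected) edge, an orientation, and a glue. -/
abbrev GlueAdd (V : Type) := Sym2 V × Bool × Glue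

section Movies

variable {V : Type} [DecidableEq V]

/-- The glue additions induced on the edge set `F` by the attachment of tile `t`
at position `z` onto `α`: one glue addition for each side of `t` (in clockwise
order starting from the north) whose edge lies in `F` and on which `t` matches
an already present neighbouring tile; the orientation is `+` (here `true`)
exactly for the south and west sides of the new tile. -/
noncomputable def attachMovie (G : SpaceGraph Dir V) (F : Set (Sym2 V))
    (α : Assembly Dir V) (t : Tile Dir) (z : V) : List (GlueAdd V) :=
  (([Dir.N, Dir.E, Dir.S, Dir.W].filter fun d =>
      cdecide (s(z, G.nbr d z) ∈ F ∧
        ∃ t', α (G.nbr d z) = some t' ∧ t d = t' (G.opp d) ∧ 0 < (t d).2)).map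
    fun d => (s(z, G.nbr d z), decide (d = Dir.S ∨ d = Dir.W), t d))

/-- The glue movie on `F` induced by an attachment sequence starting at `α`. -/
noncomputable def movieOf (G : SpaceGraph Dir V) (F : Set (Sym2 V)) :
    Assembly Dir V → List (Tile Dir × V) → List (GlueAdd V)
  | _, [] => []
  | α, a :: l => attachMovie G F α a.1 a.2 ++ movieOf G F (attach α a.1 a.2) l

/-- Restriction of an attachment sequence to the positions of `Z`. -/
noncomputable def restrictSeq (Z : Set V) (l : List (Tile Dir × V)) : List (Tile Dir × V) :=
  l.filter fun a => cdecide (a.2 ∈ Z)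

/-- The policy set of `𝒯` on `Z`: restrictions to `Z` of all assembly
sequences of `𝒯` (including the non-maximal ones). -/
noncomputable def PolicySet (G : SpaceGraph Dir V) (𝒯 : TAS Dir V) (Z : Set V) :
    Set (List (Tile Dir × V)) :=
  {p | ∃ l, IsSeqFrom G 𝒯 𝒯.seed l ∧ p = restrictSeq Z l}

/-- The diplomatic set of `𝒯` along `F`: glue movies on `F` induced by all
assembly sequences of `𝒯`. -/
noncomputable def DiploSet (G : SpaceGraph Dir V) (𝒯 : TAS Dir V) (F : Set (Sym2 V)) :
    Set (List (GlueAdd V)) :=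
  {m | ∃ l, IsSeqFrom G 𝒯 𝒯.seed l ∧ m = movieOf G F 𝒯.seed l}

/-- `S` is connected within the space graph `G`. -/
def ConnectedWithin (G : SpaceGraph Dir V) (S : Set V) : Prop :=
  ∀ u ∈ S, ∀ v ∈ S,
    Relation.ReflTransGen (fun a b => a ∈ S ∧ b ∈ S ∧ ∃ d, G.nbr d a = b) u v

/-- `X` is a cut-set separating `G` into the two connected components `Y` and `Z`. -/
def IsCutSet (G : SpaceGraph Dir V) (X : Set (Sym2 V)) (Y Z : Set V) : Prop :=
  Y ∪ Z = Set.univ ∧ Disjoint Y Z ∧ Y.Nonempty ∧ Z.Nonempty ∧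
    ConnectedWithin G Y ∧ ConnectedWithin G Z ∧
    X = {e | ∃ v d, v ∈ Y ∧ G.nbr d v ∈ Z ∧ e = s(v, G.nbr d v)}

end Movies

end ATAM


namespace ATAM
section Bisim

variable {V : Type} [DecidableEq V] (G : SpaceGraph Dir V) (𝒯 : TAS Dir V)

lemma cdecide_eq_true_iff (P : Prop) : cdecide P = true ↔ P := by
  unfold cdecide
  exact ⟨fun h => @of_decide_eq_true P (Classical.propDecidable P) h,
    fun h => @decide_eq_true P (Classical.propDecidable P) h⟩

lemma isSeqFrom_append (α : Assembly Dir V) (l₁ l₂ : List (Tile Dir × V)) :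
    IsSeqFrom G 𝒯 α (l₁ ++ l₂) ↔
      IsSeqFrom G 𝒯 α l₁ ∧ IsSeqFrom G 𝒯 (resultOf α l₁) l₂ := by
  induction l₁ generalizing α with
  | nil => simp [IsSeqFrom, resultOf]
  | cons a l ih => simp [IsSeqFrom, resultOf, ih, and_assoc]

lemma movieOf_append (F : Set (Sym2 V)) (α : Assembly Dir V) (l₁ l₂ : List (Tile Dir × V)) :
    movieOf G F α (l₁ ++ l₂) = movieOf G F α l₁ ++ movieOf G F (resultOf α l₁) l₂ := by
  induction l₁ generalizing α with
  | nil => simp [movieOf, resultOf]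
  | cons a l ih => simp [movieOf, resultOf, ih]

lemma resultOf_mem_dom (α : Assembly Dir V) (l : List (Tile Dir × V)) (w : V)
    (h : resultOf α l w ≠ none) : α w ≠ none ∨ ∃ a ∈ l, a.2 = w := by
  induction l generalizing α with
  | nil => exact Or.inl h
  | cons a l ih =>
    rcases ih (attach α a.1 a.2) h with h' | ⟨b, hb, hbw⟩
    · by_cases hw : w = a.2
      · exact Or.inr ⟨a, List.mem_cons_self, hw.symm⟩
      · left
        rwa [attach, Function.update_of_ne hw] at h'
    · exact Or.inr ⟨b, List.mem_cons_of_mem _ hb, hbw⟩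

lemma movie_edge_mem_F (F : Set (Sym2 V)) (α : Assembly Dir V) (l : List (Tile Dir × V)) :
    ∀ x ∈ movieOf G F α l, x.1 ∈ F := by
  induction l generalizing α with
  | nil => simp [movieOf]
  | cons a l ih =>
    intro x hx
    rw [movieOf, List.mem_append] at hx
    rcases hx with hx | hx
    · rw [attachMovie, List.mem_map] at hx
      obtain ⟨d, hd, rfl⟩ := hx
      have hd2 := (List.mem_filter.mp hd).2
      exact ((cdecide_eq_true_iff _).mp hd2).1
    · exact ih _ _ hx

lemma attachMovie_edge_mem (F : Set (Sym2 V)) (α : Assembly Dir V) (t : Tile Dir)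
    (z : V) (d : Dir) (t' : Tile Dir)
    (hF : s(z, G.nbr d z) ∈ F) (h1 : α (G.nbr d z) = some t')
    (h2 : t d = t' (G.opp d)) (h3 : 0 < (t d).2) :
    ∃ x ∈ attachMovie G F α t z, x.1 = s(z, G.nbr d z) := by
  refine ⟨(s(z, G.nbr d z), decide (d = Dir.S ∨ d = Dir.W), t d), ?_, rfl⟩
  rw [attachMovie, List.mem_map]
  refine ⟨d, List.mem_filter.mpr ⟨by cases d <;> simp, ?_⟩, rfl⟩
  exact (cdecide_eq_true_iff _).mpr ⟨hF, t', h1, h2, h3⟩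

/-- If the diplomatic sets of two cuts coincide, a tile can never attach
in `Z \ Z'`. -/
lemma cross_helper {X X' : Set (Sym2 V)} {Y Z Y' Z' : Set V}
    (h1 : IsCutSet G X Y Z) (h2 : IsCutSet G X' Y' Z')
    (hs1 : 𝒯.seed.dom ⊆ Y) (hs2 : 𝒯.seed.dom ⊆ Y')
    (hD : DiploSet G 𝒯 X = DiploSet G 𝒯 X') (htemp : 1 ≤ 𝒯.temp)
    {l₁ : List (Tile Dir × V)} {t : Tile Dir} {v : V}
    (hl₁ : IsSeqFrom G 𝒯 𝒯.seed l₁)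
    (hprev : ∀ a ∈ l₁, (a.2 ∈ Z ↔ a.2 ∈ Z'))
    (hatt : CanAttach G 𝒯 (resultOf 𝒯.seed l₁) t v)
    (hv : v ∈ Z) : v ∈ Z' := by
  obtain ⟨hun1, hdisj1, -, -, -, -, hX1⟩ := h1
  obtain ⟨hun2, hdisj2, -, -, -, -, hX2⟩ := h2
  obtain ⟨ht, hnone, hstr⟩ := hatt
  -- find a direction with positive side strength
  have hpos : attachStrength G (resultOf 𝒯.seed l₁) t v ≠ 0 := by omega
  obtain ⟨d, -, hd⟩ := Finset.exists_ne_zero_of_sum_ne_zero hpos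
  rw [sideStrength] at hd
  cases hw : resultOf 𝒯.seed l₁ (G.nbr d v) with
  | none => rw [hw] at hd; exact absurd rfl hd
  | some t' =>
    rw [hw] at hd
    by_cases hc : t d = t' (G.opp d) ∧ 0 < (t d).2
    swap
    · exact absurd (if_neg hc) hd
    -- classify the neighbour w := G.nbr d v
    have hwcl : (G.nbr d v ∈ Y ∧ G.nbr d v ∈ Y') ∨ (G.nbr d v ∈ Z ∧ G.nbr d v ∈ Z') := by
      rcases resultOf_mem_dom 𝒯.seed l₁ (G.nbr d v) (by rw [hw]; simp) with
        hseed | ⟨a, ha, haw⟩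
      · exact Or.inl ⟨hs1 hseed, hs2 hseed⟩
      · have hiff : G.nbr d v ∈ Z ↔ G.nbr d v ∈ Z' := haw ▸ hprev a ha
        have hwYZ : G.nbr d v ∈ Y ∪ Z := hun1 ▸ Set.mem_univ _
        rcases hwYZ with hwY | hwZ
        · have hwnZ : G.nbr d v ∉ Z := Set.disjoint_left.mp hdisj1 hwY
          have hwnZ' : G.nbr d v ∉ Z' := fun h => hwnZ (hiff.mpr h)
          have : G.nbr d v ∈ Y' ∪ Z' := hun2 ▸ Set.mem_univ _
          rcases this with hwY' | hwZ'
          · exact Or.inl ⟨hwY, hwY'⟩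
          · exact absurd hwZ' hwnZ'
        · exact Or.inr ⟨hwZ, hiff.mp hwZ⟩
    by_contra hv'
    have hvY' : v ∈ Y' := by
      have : v ∈ Y' ∪ Z' := hun2 ▸ Set.mem_univ v
      rcases this with h | h
      · exact h
      · exact absurd h hv'
    -- the run including the new attachment
    have hL : IsSeqFrom G 𝒯 𝒯.seed (l₁ ++ [(t, v)]) := by
      rw [isSeqFrom_append]
      exact ⟨hl₁, ⟨⟨ht, hnone, hstr⟩, trivial⟩⟩
    rcases hwcl with ⟨hwY, hwY'⟩ | ⟨hwZ, hwZ'⟩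
    · -- edge crosses the first cut but not the second
      have heX : s(v, G.nbr d v) ∈ X := by
        rw [hX1]
        refine ⟨G.nbr d v, G.opp d, hwY, ?_, ?_⟩
        · rw [G.nbr_opp]; exact hv
        · rw [G.nbr_opp]; exact Sym2.eq_swap
      have henX' : s(v, G.nbr d v) ∉ X' := by
        rw [hX2]
        rintro ⟨u, d', hu, hz, he⟩
        rw [Sym2.eq_iff] at he
        rcases he with ⟨h1', h2'⟩ | ⟨h1', h2'⟩
        · rw [← h2'] at hz
          exact Set.disjoint_left.mp hdisj2 hwY' hz
        · rw [← h1'] at hz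
          exact Set.disjoint_left.mp hdisj2 hvY' hz
      obtain ⟨x, hx, hxe⟩ :=
        attachMovie_edge_mem G X (resultOf 𝒯.seed l₁) t v d t' heX hw hc.1 hc.2
      have hxm : x ∈ movieOf G X 𝒯.seed (l₁ ++ [(t, v)]) := by
        rw [movieOf_append, List.mem_append]
        right
        simpa [movieOf] using hx
      have hmem : movieOf G X 𝒯.seed (l₁ ++ [(t, v)]) ∈ DiploSet G 𝒯 X' := by
        rw [← hD]
        exact ⟨l₁ ++ [(t, v)], hL, rfl⟩
      obtain ⟨l₂, -, hm⟩ := hmem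
      exact henX' (hxe ▸ movie_edge_mem_F G X' 𝒯.seed l₂ x (hm ▸ hxm))
    · -- edge crosses the second cut but not the first
      have heX' : s(v, G.nbr d v) ∈ X' := by
        rw [hX2]
        exact ⟨v, d, hvY', hwZ', rfl⟩
      have henX : s(v, G.nbr d v) ∉ X := by
        rw [hX1]
        rintro ⟨u, d', hu, hz, he⟩
        rw [Sym2.eq_iff] at he
        rcases he with ⟨h1', h2'⟩ | ⟨h1', h2'⟩
        · rw [← h1'] at hu
          exact Set.disjoint_left.mp hdisj1 hu hv
        · rw [← h2'] at hu
          exact Set.disjoint_left.mp hdisj1 hu hwZ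
      obtain ⟨x, hx, hxe⟩ :=
        attachMovie_edge_mem G X' (resultOf 𝒯.seed l₁) t v d t' heX' hw hc.1 hc.2
      have hxm : x ∈ movieOf G X' 𝒯.seed (l₁ ++ [(t, v)]) := by
        rw [movieOf_append, List.mem_append]
        right
        simpa [movieOf] using hx
      have hmem : movieOf G X' 𝒯.seed (l₁ ++ [(t, v)]) ∈ DiploSet G 𝒯 X := by
        rw [hD]
        exact ⟨l₁ ++ [(t, v)], hL, rfl⟩
      obtain ⟨l₂, -, hm⟩ := hmem
      exact henX (hxe ▸ movie_edge_mem_F G X 𝒯.seed l₂ x (hm ▸ hxm))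

lemma positions_iff {X X' : Set (Sym2 V)} {Y Z Y' Z' : Set V}
    (h1 : IsCutSet G X Y Z) (h2 : IsCutSet G X' Y' Z')
    (hs1 : 𝒯.seed.dom ⊆ Y) (hs2 : 𝒯.seed.dom ⊆ Y')
    (hD : DiploSet G 𝒯 X = DiploSet G 𝒯 X') (htemp : 1 ≤ 𝒯.temp) :
    ∀ l, IsSeqFrom G 𝒯 𝒯.seed l → ∀ a ∈ l, (a.2 ∈ Z ↔ a.2 ∈ Z') := by
  intro l
  induction l using List.reverseRecOn with
  | nil => simp
  | append_singleton l₁ a ih =>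
    intro hl b hb
    rw [isSeqFrom_append] at hl
    obtain ⟨hl₁, hatt, -⟩ := hl
    rcases List.mem_append.mp hb with hb | hb
    · exact ih hl₁ b hb
    · have hba : b = a := by simpa using hb
      subst hba
      constructor
      · exact cross_helper G 𝒯 h1 h2 hs1 hs2 hD htemp hl₁ (ih hl₁) hatt
      · exact cross_helper G 𝒯 h2 h1 hs2 hs1 hD.symm htemp hl₁
          (fun a ha => (ih hl₁ a ha).symm) hatt

lemma policy_eq {X X' : Set (Sym2 V)} {Y Z Y' Z' : Set V}
    (h1 : IsCutSet G X Y Z) (h2 : IsCutSet G X' Y' Z')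
    (hs1 : 𝒯.seed.dom ⊆ Y) (hs2 : 𝒯.seed.dom ⊆ Y')
    (hD : DiploSet G 𝒯 X = DiploSet G 𝒯 X') (htemp : 1 ≤ 𝒯.temp) :
    PolicySet G 𝒯 Z = PolicySet G 𝒯 Z' := by
  have key : ∀ l, IsSeqFrom G 𝒯 𝒯.seed l → restrictSeq Z l = restrictSeq Z' l := by
    intro l hl
    rw [restrictSeq, restrictSeq]
    refine List.filter_congr fun a ha => ?_
    have := positions_iff G 𝒯 h1 h2 hs1 hs2 hD htemp l hl a ha
    rw [cdecide, cdecide]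
    exact decide_eq_decide.mpr this
  ext p
  constructor
  · rintro ⟨l, hl, rfl⟩
    exact ⟨l, hl, key l hl⟩
  · rintro ⟨l, hl, rfl⟩
    exact ⟨l, hl, (key l hl).symm⟩

end Bisim

/-! ### Statement 0: the Bisimilarity Lemma -/

theorem bisimilarity_lemma {V : Type} [DecidableEq V]
    (G : SpaceGraph Dir V) (𝒯 : TAS Dir V) (hWF : WellFormed G 𝒯) :
    ∃ f : Set (List (GlueAdd V)) → Set (List (Tile Dir × V)),
      ∀ (X : Set (Sym2 V)) (Y Z : Set V),
        IsCutSet G X Y Z → 𝒯.seed.dom ⊆ Y →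
        PolicySet G 𝒯 Z = f (DiploSet G 𝒯 X) := by
  classical
  refine ⟨fun D => if h : ∃ W : Set (Sym2 V) × Set V × Set V,
      IsCutSet G W.1 W.2.1 W.2.2 ∧ 𝒯.seed.dom ⊆ W.2.1 ∧ DiploSet G 𝒯 W.1 = D
    then PolicySet G 𝒯 h.choose.2.2 else ∅, ?_⟩
  intro X Y Z hcut hseed
  have hex : ∃ W : Set (Sym2 V) × Set V × Set V,
      IsCutSet G W.1 W.2.1 W.2.2 ∧ 𝒯.seed.dom ⊆ W.2.1 ∧
        DiploSet G 𝒯 W.1 = DiploSet G 𝒯 X :=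
    ⟨(X, Y, Z), hcut, hseed, rfl⟩
  simp only [dif_pos hex]
  obtain ⟨hc', hs', hD'⟩ := hex.choose_spec
  exact policy_eq G 𝒯 hcut hc' hseed hs' hD'.symm hWF.1


end ATAM
end

section
/- Translation invariance of policy sets (pumping corollary of the Bisimilarity Lemma): Let 𝒯=(T,σ,τ) be a tile assembly system on ℤ² (or on any space graph acted on by translations). Let X and X' be cut-sets separating the space graph into connected components (Y,Z) and (Y',Z') respectively, with dom σ ⊆ Y and dom σ ⊆ Y'. If there is a translation vector v with Z' = Z + v and 𝒟(𝒯,X') equals the translate of 𝒟(𝒯,X) by v (every edge of every glue movie translated by v), then 𝒫(𝒯,Z') equals the translate of 𝒫(𝒯,Z) by v (every position of every restricted assembly sequence translated by v). -/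
namespace ATAM

/-- Opposite directions in the plane. -/
def Dir.opp2 : Dir → Dir
  | .N => .S
  | .E => .W
  | .S => .N
  | .W => .E

/-- Unit vector of a direction. -/
def dvec : Dir → ℤ × ℤ
  | .N => (0, 1)
  | .E => (1, 0)
  | .S => (0, -1)
  | .W => (-1, 0)

/-- The square grid of the plane, as a space graph. -/
def Z2 : SpaceGraph Dir (ℤ × ℤ) where
  opp := Dir.opp2
  nbr d v := v + dvec d
  opp_opp d := by cases d <;> rfl
  nbr_opp d v := by
    cases d <;>
      simp only [Dir.opp2, dvec, Prod.ext_iff, Prod.fst_add, Prod.snd_add] <;>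
      constructor <;> ring

end ATAM

namespace ATAM
/-! ### Statement 2: translation invariance of policy sets -/

/-- Translation of a glue movie by a vector. -/
def trMovie (v : ℤ × ℤ) (m : List (GlueAdd (ℤ × ℤ))) : List (GlueAdd (ℤ × ℤ)) :=
  m.map fun a => (Sym2.map (· + v) a.1, a.2)

/-- Translation of a restricted assembly sequence by a vector. -/
def trSeq (v : ℤ × ℤ) (l : List (Tile Dir × (ℤ × ℤ))) : List (Tile Dir × (ℤ × ℤ)) :=
  l.map fun a => (a.1, a.2 + v)

/-! ### Auxiliary development for the proof -/

section Aux

abbrev V2 := ℤ × ℤ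

lemma cdecide_true {P : Prop} : cdecide P = true ↔ P := by
  unfold cdecide
  exact @decide_eq_true_iff P (Classical.propDecidable P)

lemma Z2nbr (d : Dir) (z : V2) : Z2.nbr d z = z + dvec d := rfl

lemma Z2opp (d : Dir) : Z2.opp d = d.opp2 := rfl

lemma dvec_inj {d d' : Dir} (h : dvec d = dvec d') : d = d' := by
  cases d <;> cases d' <;> first | rfl | (exfalso; revert h; decide)

lemma dvec_ne_zero (d : Dir) : dvec d ≠ 0 := by cases d <;> decide

lemma nbr_add (d : Dir) (z w : V2) : Z2.nbr d (z + w) = Z2.nbr d z + w := by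
  simp only [Z2nbr]; ring

lemma mem_dirList (d : Dir) : d ∈ [Dir.N, Dir.E, Dir.S, Dir.W] := by
  cases d <;> simp

/-- The translation of a single glue addition. -/
def trGA (v : V2) (e : GlueAdd V2) : GlueAdd V2 := (Sym2.map (· + v) e.1, e.2)

lemma trMovie_eq (v : V2) (m : List (GlueAdd V2)) : trMovie v m = m.map (trGA v) := rfl

lemma trGA_trGA (v : V2) (e : GlueAdd V2) : trGA (-v) (trGA v e) = e := by
  unfold trGA
  refine Prod.ext ?_ rfl
  simp only [Sym2.map_map]
  have : ((· + (-v)) ∘ (· + v)) = (id : V2 → V2) := by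
    funext x; simp
  rw [this, Sym2.map_id]; rfl

lemma trMovie_trMovie (v : V2) (m : List (GlueAdd V2)) :
    trMovie (-v) (trMovie v m) = m := by
  rw [trMovie_eq, trMovie_eq, List.map_map]
  have : (trGA (-v) ∘ trGA v) = id := funext fun e => trGA_trGA v e
  rw [this, List.map_id]

lemma trSeq_trSeq (v : V2) (l : List (Tile Dir × V2)) :
    trSeq v (trSeq (-v) l) = l := by
  unfold trSeq
  rw [List.map_map]
  have : ((fun a : Tile Dir × V2 => (a.1, a.2 + v)) ∘ fun a => (a.1, a.2 + -v)) = id := by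
    funext a; simp
  rw [this, List.map_id]

lemma isSeqFrom_cons {𝒯 : TAS Dir V2} {α : Assembly Dir V2} {a : Tile Dir × V2}
    {l : List (Tile Dir × V2)} :
    IsSeqFrom Z2 𝒯 α (a :: l) ↔
      CanAttach Z2 𝒯 α a.1 a.2 ∧ IsSeqFrom Z2 𝒯 (attach α a.1 a.2) l := Iff.rfl

lemma movieOf_cons {F : Set (Sym2 V2)} {α : Assembly Dir V2} {a : Tile Dir × V2}
    {l : List (Tile Dir × V2)} :
    movieOf Z2 F α (a :: l) =
      attachMovie Z2 F α a.1 a.2 ++ movieOf Z2 F (attach α a.1 a.2) l := rfl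

lemma restrictSeq_cons_mem {Z : Set V2} {a : Tile Dir × V2} {l : List (Tile Dir × V2)}
    (h : a.2 ∈ Z) : restrictSeq Z (a :: l) = a :: restrictSeq Z l := by
  unfold restrictSeq
  rw [List.filter_cons, if_pos (cdecide_true.2 h)]

lemma restrictSeq_cons_not {Z : Set V2} {a : Tile Dir × V2} {l : List (Tile Dir × V2)}
    (h : a.2 ∉ Z) : restrictSeq Z (a :: l) = restrictSeq Z l := by
  unfold restrictSeq
  rw [List.filter_cons, if_neg (fun hc => h (cdecide_true.1 hc))]

/-- Membership in the glue movie of a single attachment. -/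
lemma mem_attachMovie {F : Set (Sym2 V2)} {α : Assembly Dir V2} {t : Tile Dir}
    {z : V2} {e : GlueAdd V2} :
    e ∈ attachMovie Z2 F α t z ↔ ∃ d,
      e = (s(z, Z2.nbr d z), decide (d = Dir.S ∨ d = Dir.W), t d) ∧
      s(z, Z2.nbr d z) ∈ F ∧
      ∃ t', α (Z2.nbr d z) = some t' ∧ t d = t' (Z2.opp d) ∧ 0 < (t d).2 := by
  unfold attachMovie
  simp only [List.mem_map, List.mem_filter, cdecide_true]
  constructor
  · rintro ⟨d, ⟨-, h⟩, rfl⟩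
    exact ⟨d, rfl, h.1, h.2⟩
  · rintro ⟨d, rfl, h1, h2⟩
    exact ⟨d, ⟨mem_dirList d, h1, h2⟩, rfl⟩

/-- `e` is a glue addition whose "new tile" endpoint is `z`. -/
def NewAt (z : V2) (e : GlueAdd V2) : Prop :=
  ∃ d, e.1 = s(z, Z2.nbr d z) ∧ e.2.1 = decide (d = Dir.S ∨ d = Dir.W)

lemma newAt_of_mem_attachMovie {F : Set (Sym2 V2)} {α : Assembly Dir V2} {t : Tile Dir}
    {z : V2} {e : GlueAdd V2} (h : e ∈ attachMovie Z2 F α t z) : NewAt z e := by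
  obtain ⟨d, rfl, -⟩ := mem_attachMovie.1 h
  exact ⟨d, rfl, rfl⟩

lemma newAt_unique {z z' : V2} {e : GlueAdd V2} (h : NewAt z e) (h' : NewAt z' e) :
    z = z' := by
  obtain ⟨d, he, hb⟩ := h
  obtain ⟨d', he', hb'⟩ := h'
  rw [he] at he'
  rw [hb] at hb'
  rw [Z2nbr, Z2nbr, Sym2.eq_iff] at he'
  rcases he' with ⟨h1, -⟩ | ⟨h1, h2⟩
  · exact h1
  · exfalso
    have h3 : z = z + (dvec d + dvec d') := by
      rw [← add_assoc, h2]; exact h1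
    have hsum : dvec d + dvec d' = 0 := (left_eq_add.1 h3)
    revert hsum hb'
    cases d <;> cases d' <;> decide

lemma newAt_translate {z : V2} {e : GlueAdd V2} (v : V2) (h : NewAt z e) :
    NewAt (z + v) (trGA v e) := by
  obtain ⟨d, he, hb⟩ := h
  refine ⟨d, ?_, hb⟩
  show Sym2.map (· + v) e.1 = _
  rw [he, Sym2.map_pair_eq, nbr_add]

lemma newAt_translate_rev {z : V2} {e : GlueAdd V2} {v : V2}
    (h : NewAt (z + v) (trGA v e)) : NewAt z e := by
  have := newAt_translate (-v) h
  rwa [trGA_trGA, add_neg_cancel_right] at this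

lemma sideStrength_eq_of {α α' : Assembly Dir V2} {t : Tile Dir} {z z' : V2} {d : Dir}
    (h : α' (Z2.nbr d z') = α (Z2.nbr d z)) :
    sideStrength Z2 α' t z' d = sideStrength Z2 α t z d := by
  unfold sideStrength
  rw [h]

lemma sideStrength_pos {α : Assembly Dir V2} {t : Tile Dir} {z : V2} {d : Dir}
    (h : sideStrength Z2 α t z d ≠ 0) :
    ∃ t', α (Z2.nbr d z) = some t' ∧ t d = t' (Z2.opp d) ∧ 0 < (t d).2 ∧
      sideStrength Z2 α t z d = (t d).2 := by
  unfold sideStrength at *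
  cases hα : α (Z2.nbr d z) with
  | none => rw [hα] at h; exact absurd rfl h
  | some t' =>
    rw [hα] at h
    by_cases hc : t d = t' (Z2.opp d) ∧ 0 < (t d).2
    · exact ⟨t', rfl, hc.1, hc.2, if_pos hc⟩
    · exact absurd (if_neg hc) h

lemma sideStrength_of_match {α : Assembly Dir V2} {t : Tile Dir} {z : V2} {d : Dir}
    {t' : Tile Dir} (h : α (Z2.nbr d z) = some t') (h2 : t d = t' (Z2.opp d))
    (h3 : 0 < (t d).2) : sideStrength Z2 α t z d = (t d).2 := by
  unfold sideStrength
  rw [h]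
  exact if_pos ⟨h2, h3⟩

lemma attach_ne_none {α : Assembly Dir V2} {t : Tile Dir} {z w : V2}
    (h : α w ≠ none ∨ w = z) : attach α t z w ≠ none := by
  unfold attach
  rcases h with h | rfl
  · rw [Function.update_apply]
    split <;> simp_all
  · rw [Function.update_self]; simp

lemma movie_not_newAt {𝒯 : TAS Dir V2} {F : Set (Sym2 V2)} :
    ∀ (L : List (Tile Dir × V2)) (α : Assembly Dir V2) (w : V2),
      IsSeqFrom Z2 𝒯 α L → α w ≠ none →
      ∀ e ∈ movieOf Z2 F α L, ¬ NewAt w e := by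
  intro L
  induction L with
  | nil => intro α w _ _ e he; exact absurd he (by simp [movieOf])
  | cons a L ih =>
    intro α w hseq hw e he
    obtain ⟨hcan, hseq'⟩ := isSeqFrom_cons.1 hseq
    rw [movieOf_cons, List.mem_append] at he
    rcases he with he | he
    · intro hN
      have hz : w = a.2 := newAt_unique hN (newAt_of_mem_attachMovie he)
      exact hw (hz ▸ hcan.2.1)
    · exact ih (attach α a.1 a.2) w hseq' (attach_ne_none (Or.inl hw)) e he

lemma block_eq {A : Type} (P : A → Prop) :
    ∀ (B C M M' : List A), B ++ M = C ++ M' →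
      (∀ x ∈ B, P x) → (∀ x ∈ C, P x) → (∀ x ∈ M, ¬ P x) → (∀ x ∈ M', ¬ P x) →
      B = C ∧ M = M' := by
  intro B
  induction B with
  | nil =>
    intro C M M' h _ hC hM _
    cases C with
    | nil => exact ⟨rfl, h⟩
    | cons c C =>
      exfalso
      have : c ∈ M := by rw [List.nil_append] at h; rw [h]; simp
      exact hM c this (hC c (by simp))
  | cons b B ih =>
    intro C M M' h hB hC hM hM'
    cases C with
    | nil =>
      exfalso
      have : b ∈ M' := by
        rw [List.nil_append] at h; rw [← h]; simp
      exact hM' b this (hB b (by simp))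
    | cons c C =>
      simp only [List.cons_append, List.cons.injEq] at h
      obtain ⟨rfl, h2⟩ := h
      obtain ⟨h3, h4⟩ := ih C M M' h2 (fun x hx => hB x (by simp [hx]))
        (fun x hx => hC x (by simp [hx])) hM hM'
      exact ⟨by rw [h3], h4⟩

open Classical in
/-- The spliced assembly: the translate of `α` on `Z'` and `β` elsewhere. -/
noncomputable def spliceAsm (Z' : Set V2) (v : V2) (α β : Assembly Dir V2) :
    Assembly Dir V2 :=
  fun w => if w ∈ Z' then α (w - v) else β w

lemma spliceAsm_mem {Z' : Set V2} {v : V2} {α β : Assembly Dir V2} {w : V2}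
    (h : w ∈ Z') : spliceAsm Z' v α β w = α (w - v) := by
  unfold spliceAsm; rw [if_pos h]

lemma spliceAsm_not_mem {Z' : Set V2} {v : V2} {α β : Assembly Dir V2} {w : V2}
    (h : w ∉ Z') : spliceAsm Z' v α β w = β w := by
  unfold spliceAsm; rw [if_neg h]

section Splice

variable {Z Z' : Set V2} {v : V2}

lemma mem_Z'_iff (hZZ' : Z' = (· + v) '' Z) {w : V2} : w ∈ Z' ↔ w - v ∈ Z := by
  rw [hZZ']
  constructor
  · rintro ⟨x, hx, rfl⟩; simpa using hx
  · intro h; exact ⟨w - v, h, by simp⟩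

lemma attach_apply {α : Assembly Dir V2} {t : Tile Dir} {z w : V2} :
    attach α t z w = if w = z then some t else α w := by
  unfold attach; rw [Function.update_apply]

lemma spliceAsm_attach_left_mem (hZZ' : Z' = (· + v) '' Z) {α β : Assembly Dir V2}
    {t : Tile Dir} {z : V2} (hz : z ∈ Z) :
    spliceAsm Z' v (attach α t z) β = attach (spliceAsm Z' v α β) t (z + v) := by
  funext u
  rw [attach_apply]
  by_cases hu : u ∈ Z'
  · rw [spliceAsm_mem hu, spliceAsm_mem hu, attach_apply]
    by_cases h : u - v = z
    · rw [if_pos h, if_pos (by rw [← h]; abel)]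
    · rw [if_neg h, if_neg (fun hh => h (by rw [hh]; abel))]
  · rw [spliceAsm_not_mem hu, spliceAsm_not_mem hu,
      if_neg (fun (hh : u = z + v) => hu (hh ▸ (mem_Z'_iff hZZ').2 (by simpa using hz)))]

lemma spliceAsm_attach_left_not (hZZ' : Z' = (· + v) '' Z) {α β : Assembly Dir V2}
    {t : Tile Dir} {z : V2} (hz : z ∉ Z) :
    spliceAsm Z' v (attach α t z) β = spliceAsm Z' v α β := by
  funext u
  by_cases hu : u ∈ Z'
  · rw [spliceAsm_mem hu, spliceAsm_mem hu, attach_apply,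
      if_neg (fun (hh : u - v = z) => hz (hh ▸ (mem_Z'_iff hZZ').1 hu))]
  · rw [spliceAsm_not_mem hu, spliceAsm_not_mem hu]

lemma spliceAsm_attach_right_mem {α β : Assembly Dir V2}
    {t : Tile Dir} {w : V2} (hw : w ∈ Z') :
    spliceAsm Z' v α (attach β t w) = spliceAsm Z' v α β := by
  funext u
  by_cases hu : u ∈ Z'
  · rw [spliceAsm_mem hu, spliceAsm_mem hu]
  · rw [spliceAsm_not_mem hu, spliceAsm_not_mem hu, attach_apply,
      if_neg (fun (hh : u = w) => hu (hh ▸ hw))]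

lemma spliceAsm_attach_right_not {α β : Assembly Dir V2}
    {t : Tile Dir} {w : V2} (hw : w ∉ Z') :
    spliceAsm Z' v α (attach β t w) = attach (spliceAsm Z' v α β) t w := by
  funext u
  rw [attach_apply]
  by_cases hu : u ∈ Z'
  · rw [spliceAsm_mem hu, spliceAsm_mem hu, if_neg (fun (hh : u = w) => hw (hh ▸ hu))]
  · rw [spliceAsm_not_mem hu, spliceAsm_not_mem hu, attach_apply]

lemma cut_edge' {X' : Set (Sym2 V2)}
    (hZc' : ∀ z d, z ∈ Z' → Z2.nbr d z ∉ Z' → s(z, Z2.nbr d z) ∈ X')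
    {z' : V2} {d : Dir} (h1 : z' ∉ Z') (h2 : Z2.nbr d z' ∈ Z') :
    s(z', Z2.nbr d z') ∈ X' := by
  have h3 := hZc' (Z2.nbr d z') (Z2.opp d) h2 (by rw [Z2.nbr_opp]; exact h1)
  rw [Z2.nbr_opp] at h3
  rw [Sym2.eq_swap]
  exact h3

lemma nbr_eq_of_sym2 {z : V2} {d d' : Dir}
    (h : s(z, Z2.nbr d z) = s(z, Z2.nbr d' z)) : d = d' := by
  rw [Sym2.eq_iff] at h
  rcases h with ⟨-, h⟩ | ⟨h1, -⟩
  · rw [Z2nbr, Z2nbr] at h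
    exact dvec_inj (add_left_cancel h)
  · exfalso
    rw [Z2nbr] at h1
    exact dvec_ne_zero d' (left_eq_add.1 h1)

lemma trGA_event (v : V2) (z : V2) (d : Dir) (b : Bool) (g : Glue) :
    trGA v (s(z, Z2.nbr d z), b, g) = (s(z + v, Z2.nbr d (z + v)), b, g) := by
  unfold trGA
  refine Prod.ext ?_ rfl
  show Sym2.map _ s(z, Z2.nbr d z) = _
  rw [Sym2.map_pair_eq, nbr_add]

lemma sideStrength_zero_of_silent {X : Set (Sym2 V2)} {α : Assembly Dir V2}
    {t : Tile Dir} {z : V2} {d : Dir} (hedge : s(z, Z2.nbr d z) ∈ X)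
    (hB : attachMovie Z2 X α t z = []) :
    sideStrength Z2 α t z d = 0 := by
  by_contra h0
  obtain ⟨t', hα, hmatch, hpos, -⟩ := sideStrength_pos h0
  have hmem : (s(z, Z2.nbr d z), decide (d = Dir.S ∨ d = Dir.W), t d)
      ∈ attachMovie Z2 X α t z :=
    mem_attachMovie.2 ⟨d, rfl, hedge, t', hα, hmatch, hpos⟩
  rw [hB] at hmem
  exact absurd hmem List.not_mem_nil

lemma side_silent_Z {X : Set (Sym2 V2)} {α β : Assembly Dir V2} {t : Tile Dir} {z : V2}
    (hZc : ∀ z d, z ∈ Z → Z2.nbr d z ∉ Z → s(z, Z2.nbr d z) ∈ X)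
    (hZZ' : Z' = (· + v) '' Z) (hzZ : z ∈ Z)
    (hB : attachMovie Z2 X α t z = []) (d : Dir) :
    sideStrength Z2 α t z d ≤ sideStrength Z2 (spliceAsm Z' v α β) t (z + v) d := by
  by_cases hw : Z2.nbr d z ∈ Z
  · refine le_of_eq (sideStrength_eq_of ?_).symm
    rw [nbr_add, spliceAsm_mem ((mem_Z'_iff hZZ').2 (by simpa using hw)),
      add_sub_cancel_right]
  · rw [sideStrength_zero_of_silent (hZc z d hzZ hw) hB]
    exact Nat.zero_le _

lemma side_silent_Y' {X' : Set (Sym2 V2)} {α β : Assembly Dir V2} {t' : Tile Dir} {z' : V2}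
    (hZc' : ∀ z d, z ∈ Z' → Z2.nbr d z ∉ Z' → s(z, Z2.nbr d z) ∈ X')
    (hz' : z' ∉ Z') (hC : attachMovie Z2 X' β t' z' = []) (d : Dir) :
    sideStrength Z2 β t' z' d ≤ sideStrength Z2 (spliceAsm Z' v α β) t' z' d := by
  by_cases hw' : Z2.nbr d z' ∈ Z'
  · rw [sideStrength_zero_of_silent (cut_edge' hZc' hz' hw') hC]
    exact Nat.zero_le _
  · exact le_of_eq (sideStrength_eq_of (spliceAsm_not_mem hw')).symm

lemma side_transfer_Z {X X' : Set (Sym2 V2)} {α β : Assembly Dir V2}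
    {t t' : Tile Dir} {z : V2}
    (hZc : ∀ z d, z ∈ Z → Z2.nbr d z ∉ Z → s(z, Z2.nbr d z) ∈ X)
    (hZZ' : Z' = (· + v) '' Z)
    (hBC : trMovie v (attachMovie Z2 X α t z) = attachMovie Z2 X' β t' (z + v))
    (hzZ : z ∈ Z) (d : Dir) :
    sideStrength Z2 α t z d ≤ sideStrength Z2 (spliceAsm Z' v α β) t (z + v) d := by
  by_cases hw : Z2.nbr d z ∈ Z
  · refine le_of_eq (sideStrength_eq_of ?_).symm
    rw [nbr_add, spliceAsm_mem ((mem_Z'_iff hZZ').2 (by simpa using hw)),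
      add_sub_cancel_right]
  · rcases Nat.eq_zero_or_pos (sideStrength Z2 α t z d) with h0 | h0
    · rw [h0]; exact Nat.zero_le _
    obtain ⟨t₁, hα, hmatch, hpos, hval⟩ := sideStrength_pos h0.ne'
    have hev : (s(z, Z2.nbr d z), decide (d = Dir.S ∨ d = Dir.W), t d)
        ∈ attachMovie Z2 X α t z :=
      mem_attachMovie.2 ⟨d, rfl, hZc z d hzZ hw, t₁, hα, hmatch, hpos⟩
    have hev' : (s(z + v, Z2.nbr d (z + v)), decide (d = Dir.S ∨ d = Dir.W), t d)
        ∈ attachMovie Z2 X' β t' (z + v) := by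
      rw [← hBC, trMovie_eq]
      exact List.mem_map.2 ⟨_, hev, trGA_event v z d _ _⟩
    obtain ⟨d₂, heq, -, t₂, hβ, hmatch₂, hpos₂⟩ := mem_attachMovie.1 hev'
    have hd : d = d₂ := nbr_eq_of_sym2 (congrArg Prod.fst heq)
    subst hd
    have hglue : t d = t' d := congrArg (fun p => p.2.2) heq
    have hnw : Z2.nbr d (z + v) ∉ Z' := by
      rw [nbr_add]
      intro hmem
      exact hw (by simpa using (mem_Z'_iff hZZ').1 hmem)
    have hsp : spliceAsm Z' v α β (Z2.nbr d (z + v)) = some t₂ := by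
      rw [spliceAsm_not_mem hnw]; exact hβ
    rw [hval, sideStrength_of_match hsp (hglue.trans hmatch₂) hpos]

lemma side_transfer_Y' {X X' : Set (Sym2 V2)} {α β : Assembly Dir V2}
    {t t' : Tile Dir} {z : V2}
    (hZc' : ∀ z d, z ∈ Z' → Z2.nbr d z ∉ Z' → s(z, Z2.nbr d z) ∈ X')
    (hZZ' : Z' = (· + v) '' Z)
    (hBC : trMovie v (attachMovie Z2 X α t z) = attachMovie Z2 X' β t' (z + v))
    (hzZ : z ∉ Z) (d : Dir) :
    sideStrength Z2 β t' (z + v) d ≤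
      sideStrength Z2 (spliceAsm Z' v α β) t' (z + v) d := by
  have hz' : z + v ∉ Z' := fun hmem => hzZ (by simpa using (mem_Z'_iff hZZ').1 hmem)
  by_cases hw' : Z2.nbr d (z + v) ∈ Z'
  · rcases Nat.eq_zero_or_pos (sideStrength Z2 β t' (z + v) d) with h0 | h0
    · rw [h0]; exact Nat.zero_le _
    obtain ⟨t₂, hβ, hmatch, hpos, hval⟩ := sideStrength_pos h0.ne'
    have hev : (s(z + v, Z2.nbr d (z + v)), decide (d = Dir.S ∨ d = Dir.W), t' d)
        ∈ attachMovie Z2 X' β t' (z + v) :=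
      mem_attachMovie.2 ⟨d, rfl, cut_edge' hZc' hz' hw', t₂, hβ, hmatch, hpos⟩
    rw [← hBC, trMovie_eq] at hev
    obtain ⟨e₁, he₁, htr⟩ := List.mem_map.1 hev
    obtain ⟨d₁, he₁eq, -, t₃, hα₃, hm₃, hp₃⟩ := mem_attachMovie.1 he₁
    rw [he₁eq, trGA_event] at htr
    have hd : d₁ = d := nbr_eq_of_sym2 (congrArg Prod.fst htr)
    subst hd
    have hglue : t d₁ = t' d₁ := congrArg (fun p => p.2.2) htr
    have hw'' : Z2.nbr d₁ z + v ∈ Z' := by rw [← nbr_add]; exact hw'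
    have hsp : spliceAsm Z' v α β (Z2.nbr d₁ (z + v)) = some t₃ := by
      rw [nbr_add, spliceAsm_mem hw'', add_sub_cancel_right]; exact hα₃
    rw [hval, sideStrength_of_match hsp (by rw [← hglue]; exact hm₃) (hglue ▸ hp₃)]
  · exact le_of_eq (sideStrength_eq_of (spliceAsm_not_mem hw')).symm

lemma trMovie_append (m m' : List (GlueAdd V2)) :
    trMovie v (m ++ m') = trMovie v m ++ trMovie v m' := by
  rw [trMovie_eq, trMovie_eq, trMovie_eq, List.map_append]

lemma splice (𝒯 : TAS Dir V2) (X X' : Set (Sym2 V2))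
    (hZc : ∀ z d, z ∈ Z → Z2.nbr d z ∉ Z → s(z, Z2.nbr d z) ∈ X)
    (hZc' : ∀ z d, z ∈ Z' → Z2.nbr d z ∉ Z' → s(z, Z2.nbr d z) ∈ X')
    (hZZ' : Z' = (· + v) '' Z) :
    ∀ (N : ℕ) (l l' : List (Tile Dir × V2)) (α β : Assembly Dir V2),
      l.length + l'.length ≤ N →
      IsSeqFrom Z2 𝒯 α l → IsSeqFrom Z2 𝒯 β l' →
      movieOf Z2 X' β l' = trMovie v (movieOf Z2 X α l) →
      ∃ L, IsSeqFrom Z2 𝒯 (spliceAsm Z' v α β) L ∧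
        restrictSeq Z' L = trSeq v (restrictSeq Z l) := by
  intro N
  induction N with
  | zero =>
    intro l l' α β hlen _ _ _
    have hl0 : l = [] := by
      cases l with
      | nil => rfl
      | cons a l => simp at hlen
    subst hl0
    exact ⟨[], trivial, by simp [restrictSeq, trSeq]⟩
  | succ N ih =>
    intro l l' α β hlen hl hl' hm
    cases l with
    | nil => exact ⟨[], trivial, by simp [restrictSeq, trSeq]⟩
    | cons a lt =>
      obtain ⟨t, z⟩ := a
      obtain ⟨hcan, hlt⟩ := isSeqFrom_cons.1 hl
      rw [movieOf_cons] at hm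
      by_cases hB : attachMovie Z2 X α t z = []
      · -- the head of `l` makes no glue on the cut
        rw [hB, List.nil_append] at hm
        by_cases hzZ : z ∈ Z
        · -- silent step inside Z : emit its translate
          obtain ⟨L, hL, hres⟩ := ih lt l' (attach α t z) β
            (by simp only [List.length_cons] at hlen ⊢; omega) hlt hl' hm
          rw [spliceAsm_attach_left_mem hZZ' hzZ] at hL
          have hzv : z + v ∈ Z' := (mem_Z'_iff hZZ').2 (by simpa using hzZ)
          refine ⟨(t, z + v) :: L, isSeqFrom_cons.2 ⟨⟨hcan.1, ?_, ?_⟩, hL⟩, ?_⟩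
          · show spliceAsm Z' v α β (z + v) = none
            rw [spliceAsm_mem hzv, add_sub_cancel_right]
            exact hcan.2.1
          · refine le_trans hcan.2.2 ?_
            unfold attachStrength
            exact Finset.sum_le_sum fun d _ => side_silent_Z hZc hZZ' hzZ hB d
          · rw [restrictSeq_cons_mem (show ((t, z + v) : Tile Dir × V2).2 ∈ Z' from hzv),
              restrictSeq_cons_mem (show ((t, z) : Tile Dir × V2).2 ∈ Z from hzZ), hres]
            rfl
        · -- silent step inside Y : skip it
          obtain ⟨L, hL, hres⟩ := ih lt l' (attach α t z) β
            (by simp only [List.length_cons] at hlen ⊢; omega) hlt hl' hm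
          rw [spliceAsm_attach_left_not hZZ' hzZ] at hL
          refine ⟨L, hL, ?_⟩
          rw [restrictSeq_cons_not (show ((t, z) : Tile Dir × V2).2 ∉ Z from hzZ)]
          exact hres
      · -- the head of `l` makes glue on the cut
        cases l' with
        | nil =>
          exfalso
          have h0 : ([] : List (GlueAdd V2)) = trMovie v
              (attachMovie Z2 X α t z) ++ trMovie v (movieOf Z2 X (attach α t z) lt) := by
            rw [← trMovie_append]; exact hm
          have := congrArg List.length h0
          simp only [List.length_nil, List.length_append, trMovie_eq, List.length_map] at this
          exact hB (List.length_eq_zero_iff.1 (by omega))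
        | cons b lt' =>
          obtain ⟨t', z'⟩ := b
          obtain ⟨hcan', hlt'⟩ := isSeqFrom_cons.1 hl'
          rw [movieOf_cons] at hm
          by_cases hC : attachMovie Z2 X' β t' z' = []
          · -- the head of `l'` makes no glue on the cut: consume it first
            rw [hC, List.nil_append] at hm
            have hm' : movieOf Z2 X' (attach β t' z') lt' =
                trMovie v (movieOf Z2 X α ((t, z) :: lt)) := by
              rw [movieOf_cons]; exact hm
            obtain ⟨L, hL, hres⟩ := ih ((t, z) :: lt) lt' α (attach β t' z')
              (by simp only [List.length_cons] at hlen ⊢; omega) hl hlt' hm'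
            by_cases hz' : z' ∈ Z'
            · rw [spliceAsm_attach_right_mem hz'] at hL
              exact ⟨L, hL, hres⟩
            · rw [spliceAsm_attach_right_not hz'] at hL
              refine ⟨(t', z') :: L, isSeqFrom_cons.2 ⟨⟨hcan'.1, ?_, ?_⟩, hL⟩, ?_⟩
              · show spliceAsm Z' v α β z' = none
                rw [spliceAsm_not_mem hz']
                exact hcan'.2.1
              · refine le_trans hcan'.2.2 ?_
                unfold attachStrength
                exact Finset.sum_le_sum fun d _ => side_silent_Y' hZc' hz' hC d
              · rw [restrictSeq_cons_not (show ((t', z') : Tile Dir × V2).2 ∉ Z' from hz')]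
                exact hres
          · -- both heads make glue: they are across the same tile position
            rw [trMovie_append] at hm
            obtain ⟨e₀, B₁, hBeq⟩ := List.exists_cons_of_ne_nil hB
            obtain ⟨f₀, C₁, hCeq⟩ := List.exists_cons_of_ne_nil hC
            have hzz' : z' = z + v := by
              have h1 : NewAt z e₀ :=
                newAt_of_mem_attachMovie (hBeq ▸ (List.mem_cons_self : e₀ ∈ e₀ :: B₁))
              have h2 : NewAt z' f₀ :=
                newAt_of_mem_attachMovie (hCeq ▸ (List.mem_cons_self : f₀ ∈ f₀ :: C₁))
              have hf : f₀ = trGA v e₀ := by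
                have := hm
                rw [hBeq, hCeq, trMovie_eq, List.map_cons] at this
                exact (List.cons.injEq _ _ _ _ ▸ this).1
              exact newAt_unique h2 (hf ▸ newAt_translate v h1)
            subst hzz'
            obtain ⟨hCB, hMM⟩ := block_eq (NewAt (z + v))
              (attachMovie Z2 X' β t' (z + v)) (trMovie v (attachMovie Z2 X α t z))
              (movieOf Z2 X' (attach β t' (z + v)) lt')
              (trMovie v (movieOf Z2 X (attach α t z) lt)) hm
              (fun x hx => newAt_of_mem_attachMovie hx)
              (fun x hx => by
                rw [trMovie_eq] at hx
                obtain ⟨e, he, rfl⟩ := List.mem_map.1 hx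
                exact newAt_translate v (newAt_of_mem_attachMovie he))
              (fun x hx => movie_not_newAt lt' (attach β t' (z + v)) (z + v) hlt'
                (attach_ne_none (Or.inr rfl)) x hx)
              (fun x hx => by
                rw [trMovie_eq] at hx
                obtain ⟨e, he, rfl⟩ := List.mem_map.1 hx
                intro hN
                exact movie_not_newAt lt (attach α t z) z hlt
                  (attach_ne_none (Or.inr rfl)) e he (newAt_translate_rev hN))
            have hm2 : movieOf Z2 X' (attach β t' (z + v)) lt' =
                trMovie v (movieOf Z2 X (attach α t z) lt) := hMM
            obtain ⟨L, hL, hres⟩ := ih lt lt' (attach α t z) (attach β t' (z + v))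
              (by simp only [List.length_cons] at hlen ⊢; omega) hlt hlt' hm2
            by_cases hzZ : z ∈ Z
            · -- the new tile is on the Z side: emit the translated step of `l`
              have hzv : z + v ∈ Z' := (mem_Z'_iff hZZ').2 (by simpa using hzZ)
              rw [spliceAsm_attach_right_mem hzv, spliceAsm_attach_left_mem hZZ' hzZ] at hL
              refine ⟨(t, z + v) :: L, isSeqFrom_cons.2 ⟨⟨hcan.1, ?_, ?_⟩, hL⟩, ?_⟩
              · show spliceAsm Z' v α β (z + v) = none
                rw [spliceAsm_mem hzv, add_sub_cancel_right]
                exact hcan.2.1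
              · refine le_trans hcan.2.2 ?_
                unfold attachStrength
                exact Finset.sum_le_sum fun d _ => side_transfer_Z hZc hZZ' hCB.symm hzZ d
              · rw [restrictSeq_cons_mem (show ((t, z + v) : Tile Dir × V2).2 ∈ Z' from hzv),
                  restrictSeq_cons_mem (show ((t, z) : Tile Dir × V2).2 ∈ Z from hzZ), hres]
                rfl
            · -- the new tile is on the Y side: emit the step of `l'`
              have hzv : z + v ∉ Z' := fun hmem => hzZ (by simpa using (mem_Z'_iff hZZ').1 hmem)
              rw [spliceAsm_attach_right_not hzv, spliceAsm_attach_left_not hZZ' hzZ] at hL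
              refine ⟨(t', z + v) :: L, isSeqFrom_cons.2 ⟨⟨hcan'.1, ?_, ?_⟩, hL⟩, ?_⟩
              · show spliceAsm Z' v α β (z + v) = none
                rw [spliceAsm_not_mem hzv]
                exact hcan'.2.1
              · refine le_trans hcan'.2.2 ?_
                unfold attachStrength
                exact Finset.sum_le_sum fun d _ => side_transfer_Y' hZc' hZZ' hCB.symm hzZ d
              · rw [restrictSeq_cons_not (show ((t', z + v) : Tile Dir × V2).2 ∉ Z' from hzv),
                  restrictSeq_cons_not (show ((t, z) : Tile Dir × V2).2 ∉ Z from hzZ)]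
                exact hres

lemma policy_incl (𝒯 : TAS Dir V2) {X X' : Set (Sym2 V2)}
    (hZc : ∀ z d, z ∈ Z → Z2.nbr d z ∉ Z → s(z, Z2.nbr d z) ∈ X)
    (hZc' : ∀ z d, z ∈ Z' → Z2.nbr d z ∉ Z' → s(z, Z2.nbr d z) ∈ X')
    (hZZ' : Z' = (· + v) '' Z)
    (hseedZ : ∀ z ∈ Z, 𝒯.seed z = none)
    (hseedZ' : ∀ z ∈ Z', 𝒯.seed z = none)
    (hD : trMovie v '' DiploSet Z2 𝒯 X ⊆ DiploSet Z2 𝒯 X') :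
    trSeq v '' PolicySet Z2 𝒯 Z ⊆ PolicySet Z2 𝒯 Z' := by
  rintro p ⟨q, ⟨l, hl, rfl⟩, rfl⟩
  have hmem : trMovie v (movieOf Z2 X 𝒯.seed l) ∈ DiploSet Z2 𝒯 X' :=
    hD ⟨_, ⟨l, hl, rfl⟩, rfl⟩
  obtain ⟨l', hl', hml'⟩ := hmem
  obtain ⟨L, hL, hres⟩ := splice 𝒯 X X' hZc hZc' hZZ' (l.length + l'.length) l l'
    𝒯.seed 𝒯.seed le_rfl hl hl' hml'.symm
  have hsp : spliceAsm Z' v 𝒯.seed 𝒯.seed = 𝒯.seed := by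
    funext w
    by_cases hw : w ∈ Z'
    · rw [spliceAsm_mem hw, hseedZ _ ((mem_Z'_iff hZZ').1 hw), hseedZ' _ hw]
    · rw [spliceAsm_not_mem hw]
  rw [hsp] at hL
  exact ⟨L, hL, hres.symm⟩

end Splice

end Aux

theorem policy_translation (𝒯 : TAS Dir (ℤ × ℤ)) (hWF : WellFormed Z2 𝒯)
    (X X' : Set (Sym2 (ℤ × ℤ))) (Y Z Y' Z' : Set (ℤ × ℤ)) (v : ℤ × ℤ)
    (hX : IsCutSet Z2 X Y Z) (hY : 𝒯.seed.dom ⊆ Y)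
    (hX' : IsCutSet Z2 X' Y' Z') (hY' : 𝒯.seed.dom ⊆ Y')
    (hZ : Z' = (· + v) '' Z)
    (hD : DiploSet Z2 𝒯 X' = trMovie v '' DiploSet Z2 𝒯 X) :
    PolicySet Z2 𝒯 Z' = trSeq v '' PolicySet Z2 𝒯 Z := by
  obtain ⟨hYZu, hYZd, -, -, -, -, hXeq⟩ := hX
  obtain ⟨hYZu', hYZd', -, -, -, -, hXeq'⟩ := hX'
  have hYc : ∀ w : V2, w ∉ Z → w ∈ Y := by
    intro w hw
    have hw' : w ∈ Y ∪ Z := by rw [hYZu]; exact Set.mem_univ w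
    rcases hw' with h | h
    · exact h
    · exact absurd h hw
  have hYc' : ∀ w : V2, w ∉ Z' → w ∈ Y' := by
    intro w hw
    have hw' : w ∈ Y' ∪ Z' := by rw [hYZu']; exact Set.mem_univ w
    rcases hw' with h | h
    · exact h
    · exact absurd h hw
  have hZc : ∀ z d, z ∈ Z → Z2.nbr d z ∉ Z → s(z, Z2.nbr d z) ∈ X := by
    intro z d hz hnz
    rw [hXeq]
    refine ⟨Z2.nbr d z, Z2.opp d, hYc _ hnz, ?_, ?_⟩
    · rw [Z2.nbr_opp]; exact hz
    · rw [Z2.nbr_opp]; exact Sym2.eq_swap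
  have hZc' : ∀ z d, z ∈ Z' → Z2.nbr d z ∉ Z' → s(z, Z2.nbr d z) ∈ X' := by
    intro z d hz hnz
    rw [hXeq']
    refine ⟨Z2.nbr d z, Z2.opp d, hYc' _ hnz, ?_, ?_⟩
    · rw [Z2.nbr_opp]; exact hz
    · rw [Z2.nbr_opp]; exact Sym2.eq_swap
  have hseedZ : ∀ z ∈ Z, 𝒯.seed z = none := by
    intro z hz
    by_contra h
    exact Set.disjoint_left.1 hYZd (hY h) hz
  have hseedZ' : ∀ z ∈ Z', 𝒯.seed z = none := by
    intro z hz
    by_contra h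
    exact Set.disjoint_left.1 hYZd' (hY' h) hz
  have hZrev : Z = (· + -v) '' Z' := by
    ext w
    constructor
    · intro hw
      exact ⟨w + v, (mem_Z'_iff hZ).2 (by simpa using hw), by simp⟩
    · rintro ⟨x, hx, rfl⟩
      have := (mem_Z'_iff hZ).1 hx
      simpa [sub_eq_add_neg] using this
  have h1 : trMovie v '' DiploSet Z2 𝒯 X ⊆ DiploSet Z2 𝒯 X' := hD.symm.subset
  have h2 : trMovie (-v) '' DiploSet Z2 𝒯 X' ⊆ DiploSet Z2 𝒯 X := by
    rintro m ⟨m', hm', rfl⟩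
    rw [hD] at hm'
    obtain ⟨m₀, hm₀, rfl⟩ := hm'
    rw [trMovie_trMovie]
    exact hm₀
  have incl1 : trSeq v '' PolicySet Z2 𝒯 Z ⊆ PolicySet Z2 𝒯 Z' :=
    policy_incl 𝒯 hZc hZc' hZ hseedZ hseedZ' h1
  have incl2 : trSeq (-v) '' PolicySet Z2 𝒯 Z' ⊆ PolicySet Z2 𝒯 Z :=
    policy_incl 𝒯 hZc' hZc hZrev hseedZ' hseedZ h2
  apply Set.Subset.antisymm
  · intro p hp
    have hmem : trSeq (-v) p ∈ PolicySet Z2 𝒯 Z := incl2 ⟨p, hp, rfl⟩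
    exact ⟨trSeq (-v) p, hmem, trSeq_trSeq v p⟩
  · exact incl1


end ATAM
end

section
/- Projection of injective cutspace assembly sequences: consider the cutspace with parameter s and the projection π(x,y,l) = (x,y). Let 𝒰' = (U, q, τ) be a tile assembly system on the cutspace whose seed q has π injective on its domain. If v is an assembly sequence of 𝒰' in the cutspace whose resulting production p satisfies that π is injective on dom p, then the projected sequence obtained by replacing each attachment t@z of v by t@π(z) is a valid assembly sequence of the tile assembly system (U, π(q), τ) on ℤ², where π(q) is the assembly placing q(z) at π(z) for each z ∈ dom q; its production is the projected assembly π(p). -/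
namespace ATAM

/-- Neighbour function of the cutspace with parameter `s`: two copies of the
plane, in which, along the ray `x ≥ 2`, the north/south edges between the rows
`y = 2s` and `y = 2s+1` are exchanged between the two layers. -/
def cutNbr (s : ℕ) (d : Dir) (v : ℤ × ℤ × Bool) : ℤ × ℤ × Bool :=
  match d with
  | .N => if v.2.1 = 2 * (s : ℤ) ∧ 2 ≤ v.1 then (v.1, v.2.1 + 1, !v.2.2)
          else (v.1, v.2.1 + 1, v.2.2)
  | .S => if v.2.1 = 2 * (s : ℤ) + 1 ∧ 2 ≤ v.1 then (v.1, v.2.1 - 1, !v.2.2)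
          else (v.1, v.2.1 - 1, v.2.2)
  | .E => (v.1 + 1, v.2.1, v.2.2)
  | .W => (v.1 - 1, v.2.1, v.2.2)

/-- The cutspace with parameter `s`, as a space graph. -/
def Cutspace (s : ℕ) : SpaceGraph Dir (ℤ × ℤ × Bool) where
  opp := Dir.opp2
  nbr := cutNbr s
  opp_opp d := by cases d <;> rfl
  nbr_opp d v := by
    obtain ⟨x, y, l⟩ := v
    cases d
    case N =>
      cases l <;> simp only [cutNbr, Dir.opp2] <;> split_ifs <;>
        simp_all [Prod.ext_iff, Bool.not_not] <;> omega
    case S =>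
      cases l <;> simp only [cutNbr, Dir.opp2] <;> split_ifs <;>
        simp_all [Prod.ext_iff, Bool.not_not] <;> omega
    case E => simp [cutNbr, Dir.opp2]
    case W => simp [cutNbr, Dir.opp2]

/-- Projection of the cutspace onto the plane. -/
def cutProj (v : ℤ × ℤ × Bool) : ℤ × ℤ := (v.1, v.2.1)

/-- The embedding `ε` of the plane into the cutspace: positions `(x, y)` with
`x ≥ 2` and `y ≥ 2` go to layer `1` (here `true`), all others to layer `0`. -/
def embedCut (v : ℤ × ℤ) : ℤ × ℤ × Bool :=
  (v.1, v.2, decide (2 ≤ v.1 ∧ 2 ≤ v.2))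

open Classical in
noncomputable def pushAsm {D V V' : Type} (φ : V → V') (σ : Assembly D V) : Assembly D V' :=
  fun w => if h : ∃ v, φ v = w then σ h.choose else none

/-- Projection of a cutspace assembly onto the plane (layer 0 taking precedence). -/
def projAsm {D : Type} (α : Assembly D (ℤ × ℤ × Bool)) : Assembly D (ℤ × ℤ) :=
  fun w =>
    match α (w.1, w.2, false) with
    | some t => some t
    | none => α (w.1, w.2, true)

/-- A sequence of attachments in the cutspace is consistent if it never touches
both preimages of the same planar position. -/
def Consistent (u : List (Tile Dir × (ℤ × ℤ × Bool))) : Prop :=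
  ∀ a ∈ u, ∀ b ∈ u, cutProj a.2 = cutProj b.2 → a.2 = b.2

/-- `Π(u)`: the projected subsequence of first occurrences of the projections
of the positions of `u` (the second argument accumulates the already-seen
planar positions). -/
def projFirst : List (Tile Dir × (ℤ × ℤ × Bool)) → List (ℤ × ℤ) → List (Tile Dir × (ℤ × ℤ))
  | [], _ => []
  | a :: l, seen =>
    if cutProj a.2 ∈ seen then projFirst l seen
    else (a.1, cutProj a.2) :: projFirst l (cutProj a.2 :: seen)

end ATAM

namespace ATAM

/-- Tiles persist along a valid assembly sequence. -/
lemma resultOf_persist {D V : Type} [Fintype D] [DecidableEq D] [DecidableEq V]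
    (G : SpaceGraph D V) (𝒯 : TAS D V) :
    ∀ (l : List (Tile D × V)) (α : Assembly D V), IsSeqFrom G 𝒯 α l →
      ∀ w t, α w = some t → resultOf α l w = some t := by
  intro l
  induction l with
  | nil => intro α _ w t h; exact h
  | cons a l ih =>
    intro α hseq w t h
    obtain ⟨hcan, hrest⟩ := hseq
    refine ih _ hrest w t ?_
    unfold attach
    rcases eq_or_ne w a.2 with rfl | hne
    · rw [hcan.2.1] at h; exact absurd h (by simp)
    · rwa [Function.update_of_ne hne]

lemma cutProj_nbr (s : ℕ) (d : Dir) (z : ℤ × ℤ × Bool) :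
    cutProj (cutNbr s d z) = Z2.nbr d (cutProj z) := by
  cases d <;> simp only [cutNbr, cutProj, Z2, dvec] <;>
    (try split_ifs) <;> simp [Prod.ext_iff] <;> ring

lemma projAsm_eq_of_mem (α : Assembly Dir (ℤ × ℤ × Bool))
    (hinj : Set.InjOn cutProj α.dom) (z : ℤ × ℤ × Bool) (u : Tile Dir)
    (hz : α z = some u) : projAsm α (cutProj z) = some u := by
  obtain ⟨x, y, b⟩ := z
  cases b
  · simp [projAsm, cutProj, hz]
  · have h0 : α (x, y, false) = none := by
      cases h0 : α (x, y, false) with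
      | none => rfl
      | some u' =>
        have := hinj (show (x,y,false) ∈ α.dom by simp [Assembly.dom, h0])
          (show (x,y,true) ∈ α.dom by simp [Assembly.dom, hz]) (by rfl)
        simp at this
    simp [projAsm, cutProj, h0, hz]

lemma projAsm_attach (α : Assembly Dir (ℤ × ℤ × Bool)) (t : Tile Dir)
    (z : ℤ × ℤ × Bool) (hz : α z = none) (hz' : α (z.1, z.2.1, !z.2.2) = none) :
    projAsm (attach α t z) = attach (projAsm α) t (cutProj z) := by
  obtain ⟨x, y, b⟩ := z
  funext w
  obtain ⟨a, c⟩ := w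
  rcases eq_or_ne (a, c) (x, y) with h | h
  · obtain ⟨rfl, rfl⟩ : a = x ∧ c = y := Prod.mk.injEq .. ▸ h
    cases b
    · simp_all [projAsm, attach, cutProj, Function.update]
    · simp_all [projAsm, attach, cutProj, Function.update]
  · have h1 : (a, c, false) ≠ (x, y, b) := by
      intro hh; exact h (by simpa using congrArg (fun p => (p.1, p.2.1)) hh)
    have h2 : (a, c, true) ≠ (x, y, b) := by
      intro hh; exact h (by simpa using congrArg (fun p => (p.1, p.2.1)) hh)
    have h3 : (a, c) ≠ cutProj (x, y, b) := by simpa [cutProj] using h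
    simp [projAsm, attach, Function.update_of_ne h1, Function.update_of_ne h2,
      Function.update_of_ne h3]

lemma sideStrength_le (s : ℕ) (α : Assembly Dir (ℤ × ℤ × Bool))
    (hinj : Set.InjOn cutProj α.dom) (t : Tile Dir) (z : ℤ × ℤ × Bool) (d : Dir) :
    sideStrength (Cutspace s) α t z d ≤ sideStrength Z2 (projAsm α) t (cutProj z) d := by
  unfold sideStrength
  cases hn : α ((Cutspace s).nbr d z) with
  | none => exact Nat.zero_le _
  | some t' =>
    have : projAsm α (Z2.nbr d (cutProj z)) = some t' := by
      rw [← cutProj_nbr s d z]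
      exact projAsm_eq_of_mem α hinj _ _ hn
    rw [this]
    have hopp : (Cutspace s).opp d = Z2.opp d := rfl
    rw [hopp]

lemma proj_seq_aux (s : ℕ) (U : Finset (Tile Dir)) (q : Assembly Dir (ℤ × ℤ × Bool))
    (q2 : Assembly Dir (ℤ × ℤ)) (τ : ℕ) :
    ∀ (v : List (Tile Dir × (ℤ × ℤ × Bool))) (α : Assembly Dir (ℤ × ℤ × Bool)),
      IsSeqFrom (Cutspace s) ⟨U, q, τ⟩ α v →
      Set.InjOn cutProj (resultOf α v).dom →
      IsSeqFrom Z2 (⟨U, q2, τ⟩ : TAS Dir (ℤ × ℤ)) (projAsm α)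
          (v.map fun a => (a.1, cutProj a.2)) ∧
      resultOf (projAsm α) (v.map fun a => (a.1, cutProj a.2)) = projAsm (resultOf α v) := by
  intro v
  induction v with
  | nil => intro α _ _; exact ⟨trivial, rfl⟩
  | cons a l ih =>
    rintro α ⟨hcan, hrest⟩ hp
    obtain ⟨t, z⟩ := a
    obtain ⟨htU, hz, hstr⟩ := hcan
    set α' := attach α t z with hα'
    -- persistence into the final assembly
    have hpers : ∀ w u, α' w = some u → resultOf α' l w = some u :=
      resultOf_persist (Cutspace s) ⟨U, q, τ⟩ l α' hrest
    have hfz : resultOf α' l z = some t := by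
      refine hpers z t ?_
      simp [hα', attach, Function.update]
    -- the other preimage of cutProj z is empty in α
    have hz' : α (z.1, z.2.1, !z.2.2) = none := by
      cases h' : α (z.1, z.2.1, !z.2.2) with
      | none => rfl
      | some u =>
        exfalso
        have hne : (z.1, z.2.1, !z.2.2) ≠ z := by
          obtain ⟨x, y, b⟩ := z; simp
        have h'' : α' (z.1, z.2.1, !z.2.2) = some u := by
          simp [hα', attach, Function.update_of_ne hne, h']
        have hf' := hpers _ u h''
        have := hp (show (z.1, z.2.1, !z.2.2) ∈ (resultOf α' l).dom by
            simp [Assembly.dom, hf'])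
          (show z ∈ (resultOf α' l).dom by simp [Assembly.dom, hfz])
          (by simp [cutProj])
        exact hne this
    -- injectivity on the domain of α
    have hsub : ∀ w u, α w = some u → resultOf α' l w = some u := by
      intro w u hw
      have hne : w ≠ z := by rintro rfl; rw [hz] at hw; exact absurd hw (by simp)
      exact hpers w u (by simp [hα', attach, Function.update_of_ne hne, hw])
    have hinjα : Set.InjOn cutProj α.dom := by
      intro w1 h1 w2 h2 he
      obtain ⟨u1, hu1⟩ := Option.ne_none_iff_exists'.mp h1
      obtain ⟨u2, hu2⟩ := Option.ne_none_iff_exists'.mp h2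
      exact hp (show w1 ∈ (resultOf α' l).dom by simp [Assembly.dom, hsub w1 u1 hu1])
        (show w2 ∈ (resultOf α' l).dom by simp [Assembly.dom, hsub w2 u2 hu2]) he
    -- projection of the attach
    have hproj : projAsm α' = attach (projAsm α) t (cutProj z) :=
      projAsm_attach α t z hz hz'
    -- the projected position is empty
    have hzp : projAsm α (cutProj z) = none := by
      obtain ⟨x, y, b⟩ := z
      have hzf : α (x, y, false) = none := by
        cases b
        · exact hz
        · simpa using hz'
      have hzt : α (x, y, true) = none := by
        cases b
        · simpa using hz'
        · exact hz
      simp [projAsm, cutProj, hzf, hzt]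
    -- attach strength is at least as large in the projection
    have hstr' : τ ≤ attachStrength Z2 (projAsm α) t (cutProj z) := by
      refine le_trans hstr (Finset.sum_le_sum ?_)
      intro d _
      exact sideStrength_le s α hinjα t z d
    obtain ⟨ihseq, ihres⟩ := ih α' hrest hp
    refine ⟨⟨⟨htU, hzp, hstr'⟩, ?_⟩, ?_⟩
    · rw [← hproj]; exact ihseq
    · show resultOf (attach (projAsm α) t (cutProj z)) _ = _
      rw [← hproj]; exact ihres

/-! ### Statement 14: projection of injective cutspace assembly sequences -/

theorem projection_of_injective_sequences (s : ℕ) (U : Finset (Tile Dir))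
    (q : Assembly Dir (ℤ × ℤ × Bool)) (τ : ℕ)
    (hq : Set.InjOn cutProj q.dom)
    (v : List (Tile Dir × (ℤ × ℤ × Bool)))
    (hv : IsSeqFrom (Cutspace s) ⟨U, q, τ⟩ q v)
    (hp : Set.InjOn cutProj (resultOf q v).dom) :
    IsSeqFrom Z2 (⟨U, projAsm q, τ⟩ : TAS Dir (ℤ × ℤ)) (projAsm q)
      (v.map fun a => (a.1, cutProj a.2)) ∧
    resultOf (projAsm q) (v.map fun a => (a.1, cutProj a.2)) = projAsm (resultOf q v) :=
  proj_seq_aux s U q (projAsm q) τ v q hv hp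


end ATAM
end
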